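/- For n ≥ 3, the group SL_n(ℚ) is normally generated by SL_n(ℤ): the normal closure in SL_n(ℚ) of the subgroup consisting of determinant-one matrices with integer entries (i.e., the image of the canonical embedding SL_n(ℤ) → SL_n(ℚ)) is all of SL_n(ℚ). -/

import Mathlib

open Matrix

namespace SLQNC

variable {n : ℕ}

/-- The normal closure of the image of `SL_n(ℤ)` in `SL_n(ℚ)`. -/
def Ncl (n : ℕ) : Subgroup (SpecialLinearGroup (Fin n) ℚ) :=
  Subgroup.normalClosure
    (Set.range (SpecialLinearGroup.map (Int.castRingHom ℚ) :
        SpecialLinearGroup (Fin n) ℤ → SpecialLinearGroup (Fin n) ℚ))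

/-- Lift of a determinant-one matrix to the special linear group. -/
def lift (M : Matrix (Fin n) (Fin n) ℚ) (h : M.det = 1) : SpecialLinearGroup (Fin n) ℚ :=
  ⟨M, h⟩

@[simp] lemma lift_coe (M : Matrix (Fin n) (Fin n) ℚ) (h : M.det = 1) :
    (lift M h : Matrix (Fin n) (Fin n) ℚ) = M := rfl

lemma lift_mul (M M' : Matrix (Fin n) (Fin n) ℚ) (h : M.det = 1) (h' : M'.det = 1) :
    lift M h * lift M' h' = lift (M * M') (by rw [det_mul, h, h', one_mul]) := rfl

lemma tv_apply {R : Type*} [CommRing R] (i j : Fin n) (c : R) (p q : Fin n) :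
    transvection i j c p q = (if p = q then 1 else 0) + (if i = p ∧ j = q then c else 0) := by
  simp [transvection, Matrix.one_apply, Matrix.single]

lemma diag_conj_tv (i j : Fin n) (hij : i ≠ j) (δ δ' : Fin n → ℚ)
    (h : ∀ l, δ l * δ' l = 1) (c : ℚ) :
    diagonal δ * transvection i j c * diagonal δ' = transvection i j (δ i * c * δ' j) := by
  ext p q
  rw [Matrix.mul_diagonal, Matrix.diagonal_mul, tv_apply, tv_apply]
  rcases eq_or_ne p q with rfl | hpq
  · have hnot : ¬(i = p ∧ j = p) := fun ⟨h1, h2⟩ => hij (h1.trans h2.symm)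
    simp [hnot, h p]
  · rcases Classical.em (i = p ∧ j = q) with ⟨rfl, rfl⟩ | hm
    · simp [hpq]
    · simp [hpq, hm]

/-- Existence of a third index. -/
lemma exists_third (hn : 3 ≤ n) (i j : Fin n) : ∃ k : Fin n, k ≠ i ∧ k ≠ j := by
  by_contra h
  push_neg at h
  have hsub : (Finset.univ : Finset (Fin n)) ⊆ {i, j} := by
    intro k _
    rcases Classical.em (k = i) with rfl | hk
    · simp
    · simp [h k hk]
  have h1 := Finset.card_le_card hsub
  rw [Finset.card_univ, Fintype.card_fin] at h1
  have h2 : ({i, j} : Finset (Fin n)).card ≤ 2 :=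
    le_trans (Finset.card_insert_le _ _) (by simp)
  omega

lemma tv_mem (hn : 3 ≤ n) (i j : Fin n) (hij : i ≠ j) (c : ℚ) :
    lift (transvection i j c) (det_transvection_of_ne i j hij c) ∈ Ncl n := by
  obtain ⟨k, hki, hkj⟩ := exists_third hn i j
  set b : ℚ := (c.den : ℚ) with hbdef
  have hb : b ≠ 0 := by
    simp [hbdef, c.den_nz]
  set δ : Fin n → ℚ := fun l => if l = i then b else if l = k then b⁻¹ else 1 with hδdef
  set δ' : Fin n → ℚ := fun l => (δ l)⁻¹ with hδ'def
  have hδne : ∀ l, δ l ≠ 0 := by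
    intro l
    simp only [hδdef]
    split_ifs <;> simp [hb]
  have hδδ' : ∀ l, δ l * δ' l = 1 := fun l => mul_inv_cancel₀ (hδne l)
  have hprod : ∏ l, δ l = 1 := by
    rw [← Finset.mul_prod_erase Finset.univ δ (Finset.mem_univ i),
      ← Finset.mul_prod_erase _ δ (Finset.mem_erase.mpr ⟨hki, Finset.mem_univ k⟩),
      Finset.prod_eq_one]
    · simp [hδdef, hki, hb]
    · intro l hl
      simp only [Finset.mem_erase] at hl
      simp [hδdef, hl.1, hl.2.1]
  have hdet : det (diagonal δ) = 1 := by rw [det_diagonal]; exact hprod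
  have hdet' : det (diagonal δ') = 1 := by
    rw [det_diagonal]
    simp only [hδ'def]
    rw [Finset.prod_inv_distrib, hprod, inv_one]
  set D := lift (diagonal δ) hdet with hD
  set D' := lift (diagonal δ') hdet' with hD'
  have hDD' : D * D' = 1 := by
    apply Subtype.ext
    show diagonal δ * diagonal δ' = _
    rw [diagonal_mul_diagonal]
    have heq : (fun l => δ l * δ' l) = fun _ => (1:ℚ) := funext hδδ'
    rw [heq]
    exact Matrix.diagonal_one
  set g0 : SpecialLinearGroup (Fin n) ℤ :=
    ⟨transvection i j c.num, det_transvection_of_ne i j hij c.num⟩ with hg0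
  set T := lift (transvection i j c) (det_transvection_of_ne i j hij c) with hT
  have hmap : SpecialLinearGroup.map (Int.castRingHom ℚ) g0 = D * T * D' := by
    apply Subtype.ext
    show (Int.castRingHom ℚ).mapMatrix (transvection i j c.num)
      = diagonal δ * transvection i j c * diagonal δ'
    rw [diag_conj_tv i j hij δ δ' hδδ' c]
    have hδi : δ i = b := by simp [hδdef]
    have hδ'j : δ' j = 1 := by
      simp [hδ'def, hδdef, hij.symm, hkj.symm]
    have hbc : b * c = (c.num : ℚ) := by
      rw [hbdef, mul_comm]
      exact_mod_cast Rat.mul_den_eq_num c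
    ext p q
    rw [hδi, hδ'j, mul_one, hbc]
    simp [RingHom.mapMatrix_apply, Matrix.map_apply, tv_apply,
      apply_ite (fun x : ℤ => (x : ℚ))]
  have hconj := (Subgroup.normalClosure_normal
      (s := (Set.range (SpecialLinearGroup.map (Int.castRingHom ℚ) :
        SpecialLinearGroup (Fin n) ℤ → SpecialLinearGroup (Fin n) ℚ)))).conj_mem
      _ (Subgroup.subset_normalClosure ⟨g0, rfl⟩) D⁻¹
  rw [hmap] at hconj
  have hD'eq : D' = D⁻¹ := eq_inv_of_mul_eq_one_right hDD'
  have hTeq : D⁻¹ * (D * T * D') * D⁻¹⁻¹ = T := by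
    rw [hD'eq]; group
  rw [hTeq] at hconj
  exact hconj

lemma six_tv (i j : Fin n) (hij : i ≠ j) (a : ℚ) (ha : a ≠ 0) :
    Matrix.diagonal (fun l => if l = i then a else if l = j then a⁻¹ else 1) =
      transvection i j a * (transvection j i (-a⁻¹) * (transvection i j a *
        (transvection i j (-1) * (transvection j i 1 * transvection i j (-1))))) := by
  ext p q
  rcases eq_or_ne p i with rfl | hpi
  · simp [Matrix.diagonal_apply, hij, hij.symm, tv_apply, Matrix.transvection_mul_apply_same,
      Matrix.transvection_mul_apply_of_ne, ha]
    split_ifs <;> field_simp <;> ring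
  · rcases eq_or_ne p j with rfl | hpj
    · simp [Matrix.diagonal_apply, hij, hij.symm, hpi, tv_apply,
        Matrix.transvection_mul_apply_same, Matrix.transvection_mul_apply_of_ne, ha]
      split_ifs <;> field_simp <;> ring
    · simp [Matrix.diagonal_apply, hij, hij.symm, hpi, hpj, tv_apply,
        Matrix.transvection_mul_apply_of_ne]
      exact fun h => absurd h.symm hpi

lemma pair_prod (i j : Fin n) (hij : i ≠ j) (a : ℚ) (ha : a ≠ 0) :
    ∏ l, (if l = i then a else if l = j then a⁻¹ else 1) = 1 := by
  rw [← Finset.mul_prod_erase Finset.univ _ (Finset.mem_univ i),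
    ← Finset.mul_prod_erase _ _ (Finset.mem_erase.mpr ⟨hij.symm, Finset.mem_univ j⟩),
    Finset.prod_eq_one]
  · simp [hij.symm, ha]
  · intro l hl
    simp only [Finset.mem_erase] at hl
    simp [hl.1, hl.2.1]

lemma diagpair_mem (hn : 3 ≤ n) (i j : Fin n) (hij : i ≠ j) (a : ℚ) (ha : a ≠ 0)
    (hd : det (diagonal fun l => if l = i then a else if l = j then a⁻¹ else 1) = 1) :
    lift (diagonal fun l => if l = i then a else if l = j then a⁻¹ else 1) hd ∈ Ncl n := by
  have heq : lift (diagonal fun l => if l = i then a else if l = j then a⁻¹ else 1) hd =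
      lift (transvection i j a) (det_transvection_of_ne i j hij a) *
      (lift (transvection j i (-a⁻¹)) (det_transvection_of_ne j i hij.symm (-a⁻¹)) *
      (lift (transvection i j a) (det_transvection_of_ne i j hij a) *
      (lift (transvection i j (-1)) (det_transvection_of_ne i j hij (-1)) *
      (lift (transvection j i 1) (det_transvection_of_ne j i hij.symm 1) *
        lift (transvection i j (-1)) (det_transvection_of_ne i j hij (-1)))))) := by
    apply Subtype.ext
    exact six_tv i j hij a ha
  rw [heq]
  exact mul_mem (tv_mem hn i j hij a) (mul_mem (tv_mem hn j i hij.symm (-a⁻¹))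
    (mul_mem (tv_mem hn i j hij a) (mul_mem (tv_mem hn i j hij (-1))
      (mul_mem (tv_mem hn j i hij.symm 1) (tv_mem hn i j hij (-1))))))

lemma diag_mem_aux (hn : 3 ≤ n) (m : ℕ) :
    ∀ (δ : Fin n → ℚ) (h1 : ∏ l, δ l = 1),
      (Finset.univ.filter fun l => δ l ≠ 1).card ≤ m →
      lift (diagonal δ) (by rw [det_diagonal]; exact h1) ∈ Ncl n := by
  induction m with
  | zero =>
    intro δ h1 hcard
    have hall : ∀ l, δ l = 1 := by
      intro l
      by_contra hl
      have hmem : l ∈ Finset.univ.filter fun l => δ l ≠ 1 := by simp [hl]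
      have := Finset.card_pos.mpr ⟨l, hmem⟩
      omega
    have hδ : δ = fun _ => 1 := funext hall
    have heq1 : lift (diagonal δ) (by rw [det_diagonal]; exact h1) = 1 := by
      apply Subtype.ext
      show diagonal δ = _
      rw [hδ]
      exact Matrix.diagonal_one
    rw [heq1]
    exact one_mem _
  | succ m ih =>
    intro δ h1 hcard
    rcases Nat.eq_zero_or_pos (Finset.univ.filter fun l => δ l ≠ 1).card with h0 | hpos
    · exact ih δ h1 (by omega)
    obtain ⟨i, hi⟩ := Finset.card_pos.mp hpos
    simp only [Finset.mem_filter, Finset.mem_univ, true_and] at hi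
    have hδne : ∀ l, δ l ≠ 0 := fun l hl =>
      one_ne_zero (h1.symm.trans (Finset.prod_eq_zero (Finset.mem_univ l) hl))
    obtain ⟨j, hji, hj⟩ : ∃ j, j ≠ i ∧ δ j ≠ 1 := by
      by_contra hc
      push_neg at hc
      have hsingle : ∏ l, δ l = δ i := Finset.prod_eq_single i (fun l _ hl => by
        by_contra h
        exact h (hc l hl)) (fun h => absurd (Finset.mem_univ i) h)
      exact hi (hsingle ▸ h1 ▸ rfl)
    set δ' : Fin n → ℚ := fun l => if l = i then 1 else if l = j then δ i * δ j else δ l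
      with hδ'def
    set f : Fin n → ℚ := fun l => if l = i then δ i else if l = j then (δ i)⁻¹ else 1 with hfdef
    have hδ'i : δ' i = 1 := by simp [hδ'def]
    have hδ'j : δ' j = δ i * δ j := by simp [hδ'def, hji]
    have hprodδ' : ∏ l, δ' l = 1 := by
      have e1 : ∀ g : Fin n → ℚ,
          ∏ l, g l = g i * (g j * ∏ l ∈ (Finset.univ.erase i).erase j, g l) := by
        intro g
        rw [← Finset.mul_prod_erase Finset.univ g (Finset.mem_univ i),
          ← Finset.mul_prod_erase _ g (Finset.mem_erase.mpr ⟨hji, Finset.mem_univ j⟩)]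
      have e2 : ∏ l ∈ (Finset.univ.erase i).erase j, δ' l
          = ∏ l ∈ (Finset.univ.erase i).erase j, δ l := by
        apply Finset.prod_congr rfl
        intro l hl
        simp only [Finset.mem_erase] at hl
        simp [hδ'def, hl.1, hl.2.1]
      rw [e1 δ', e2, hδ'i, hδ'j, one_mul, mul_assoc]
      rw [e1 δ] at h1
      exact h1
    have hfact : diagonal δ = diagonal δ' * diagonal f := by
      rw [diagonal_mul_diagonal]
      refine congrArg Matrix.diagonal (funext fun l => ?_)
      rcases eq_or_ne l i with rfl | hli
      · simp [hδ'def, hfdef]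
      · rcases eq_or_ne l j with rfl | hlj
        · simp only [hδ'def, hfdef, if_neg hli, if_pos rfl, if_true]
          rw [mul_comm (δ i) (δ l), mul_inv_cancel_right₀ (hδne i)]
        · simp [hδ'def, hfdef, hli, hlj]
    have hdf : det (diagonal f) = 1 := by
      rw [det_diagonal]
      exact pair_prod i j (Ne.symm hji) (δ i) (hδne i)
    have heq : lift (diagonal δ) (by rw [det_diagonal]; exact h1) =
        lift (diagonal δ') (by rw [det_diagonal]; exact hprodδ') * lift (diagonal f) hdf :=
      Subtype.ext hfact
    rw [heq]
    have hcard' : (Finset.univ.filter fun l => δ' l ≠ 1).card ≤ m := by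
      have hsub : (Finset.univ.filter fun l => δ' l ≠ 1) ⊆
          (Finset.univ.filter fun l => δ l ≠ 1).erase i := by
        intro l hl
        simp only [Finset.mem_filter, Finset.mem_univ, true_and] at hl
        rcases eq_or_ne l i with rfl | hli
        · exact absurd hδ'i hl
        · refine Finset.mem_erase.mpr ⟨hli, Finset.mem_filter.mpr ⟨Finset.mem_univ l, ?_⟩⟩
          rcases eq_or_ne l j with rfl | hlj
          · exact hj
          · simpa [hδ'def, hli, hlj] using hl
      have hle := Finset.card_le_card hsub
      rw [Finset.card_erase_of_mem (by simp [hi])] at hle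
      omega
    exact mul_mem (ih δ' hprodδ' hcard') (diagpair_mem hn i j (Ne.symm hji) (δ i) (hδne i) hdf)

lemma diag_mem (hn : 3 ≤ n) (δ : Fin n → ℚ) (h1 : ∏ l, δ l = 1) :
    lift (diagonal δ) (by rw [det_diagonal]; exact h1) ∈ Ncl n :=
  diag_mem_aux hn _ δ h1 le_rfl

lemma prod_tv_mem (hn : 3 ≤ n) (L : List (TransvectionStruct (Fin n) ℚ)) :
    lift ((L.map TransvectionStruct.toMatrix).prod)
      (TransvectionStruct.det_toMatrix_prod L) ∈ Ncl n := by
  induction L with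
  | nil =>
    have h1 : lift ((([] : List (TransvectionStruct (Fin n) ℚ)).map
        TransvectionStruct.toMatrix).prod) (TransvectionStruct.det_toMatrix_prod []) = 1 :=
      Subtype.ext (by simp)
    rw [h1]; exact one_mem _
  | cons t L ihL =>
    have h2 : lift (((t :: L).map TransvectionStruct.toMatrix).prod)
        (TransvectionStruct.det_toMatrix_prod (t :: L)) =
        lift t.toMatrix t.det *
        lift ((L.map TransvectionStruct.toMatrix).prod)
          (TransvectionStruct.det_toMatrix_prod L) :=
      Subtype.ext (by simp)
    rw [h2]
    refine mul_mem ?_ ihL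
    obtain ⟨ti, tj, tij, tc⟩ := t
    have h3 : (TransvectionStruct.mk ti tj tij tc).toMatrix = transvection ti tj tc :=
      TransvectionStruct.toMatrix_mk ti tj tij tc
    have h4 : lift (TransvectionStruct.mk ti tj tij tc).toMatrix
        (TransvectionStruct.mk ti tj tij tc).det =
        lift (transvection ti tj tc) (det_transvection_of_ne ti tj tij tc) :=
      Subtype.ext h3
    rw [h4]
    exact tv_mem hn ti tj tij tc

end SLQNC

/-- For `n ≥ 3`, the group `SLₙ(ℚ)` is normally generated by `SLₙ(ℤ)`. -/
theorem SL_n_Q_normally_generated_by_SL_n_Z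
    (n : ℕ) (hn : 3 ≤ n) :
    Subgroup.normalClosure
        (Set.range (Matrix.SpecialLinearGroup.map (Int.castRingHom ℚ) :
          Matrix.SpecialLinearGroup (Fin n) ℤ → Matrix.SpecialLinearGroup (Fin n) ℚ)) = ⊤ := by
  rw [Subgroup.eq_top_iff']
  intro g
  show g ∈ SLQNC.Ncl n
  obtain ⟨L, L', D, h⟩ :=
    Matrix.Pivot.exists_list_transvec_mul_mul_list_transvec_eq_diagonal
      (g : Matrix (Fin n) (Fin n) ℚ)
  set A := SLQNC.lift ((L.map Matrix.TransvectionStruct.toMatrix).prod)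
      (Matrix.TransvectionStruct.det_toMatrix_prod L) with hA
  set B := SLQNC.lift ((L'.map Matrix.TransvectionStruct.toMatrix).prod)
      (Matrix.TransvectionStruct.det_toMatrix_prod L') with hB
  have hprodD : ∏ l, D l = 1 := by
    rw [← Matrix.det_diagonal, ← h]
    simp [Matrix.det_mul, Matrix.TransvectionStruct.det_toMatrix_prod]
  have hAB : A * g * B = SLQNC.lift (Matrix.diagonal D)
      (by rw [Matrix.det_diagonal]; exact hprodD) :=
    Subtype.ext h
  have hg : g = A⁻¹ * (A * g * B) * B⁻¹ := by group
  rw [hg, hAB]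
  exact mul_mem (mul_mem (inv_mem (SLQNC.prod_tv_mem hn L))
    (SLQNC.diag_mem hn D hprodD)) (inv_mem (SLQNC.prod_tv_mem hn L'))
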